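/- Fix b ≠ 0 and ω with 0 < ω < |b|/2. Let 0 < q < q' ≤ 2, and suppose q satisfies the non-thresholding condition: q ≥ 1, or q < 1 and ω < (|b|/(2−q))·(2(1−q))^((1−q)/(2−q))·q^(1/(2−q)). If h is a global minimizer of F(ω, q, b) and h' is a global minimizer of F(ω, q', b), then |h| ≥ |h'| > 0: for ω below |b|/2, nonzero mode-thresholding values are nonincreasing in q. -/

import Mathlib

/-- The scalar objective `F(ω, q, b)(β) = (1/2)(b − β)² + (ω^(2−q)/q)·|β|^q`,
with real-exponent powers (`rpow`). -/
noncomputable def F (ω q b β : ℝ) : ℝ :=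
  (1 / 2) * (b - β) ^ 2 + (ω ^ (2 - q) / q) * |β| ^ q

open Real Set Filter

/-- One-sided objective. -/
noncomputable def Gf (ω p B σ : ℝ) : ℝ :=
  (1 / 2) * (B - σ) ^ 2 + (ω ^ (2 - p) / p) * σ ^ p

lemma Gf_of_F {b ω p x : ℝ}
    (hmin : ∀ β : ℝ, F ω p b x ≤ F ω p b β) :
    ∀ σ : ℝ, 0 ≤ σ → Gf ω p |b| |x| ≤ Gf ω p |b| σ := by
  intro σ hσ
  set β : ℝ := if 0 ≤ b then σ else -σ with hβ
  have hβabs : |β| = σ := by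
    by_cases hb : 0 ≤ b <;>
      simp [hβ, hb, abs_of_nonneg hσ]
  have hbb : (b - β) ^ 2 = (|b| - σ) ^ 2 := by
    by_cases hb : 0 ≤ b
    · simp [hβ, hb, abs_of_nonneg hb]
    · push_neg at hb
      simp only [hβ, if_neg (not_le.2 hb), abs_of_neg hb]
      ring
  have h1 : (|b| - |x|) ^ 2 ≤ (b - x) ^ 2 := by
    have ha := abs_sub_abs_le_abs_sub b x
    have hb' := abs_sub_abs_le_abs_sub x b
    rw [abs_sub_comm] at hb'
    calc (|b| - |x|) ^ 2 ≤ |b - x| ^ 2 := sq_le_sq' (by linarith) ha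
      _ = (b - x) ^ 2 := sq_abs _
  have h2 := hmin β
  simp only [F, Gf] at h2 ⊢
  rw [hβabs, hbb] at h2
  nlinarith [h2, h1]

lemma hasDerivAt_Gf {ω p B x : ℝ} (hp : p ≠ 0) (hx : x ≠ 0) :
    HasDerivAt (fun σ => Gf ω p B σ) (x - B + ω ^ (2 - p) * x ^ (p - 1)) x := by
  unfold Gf
  have hb : HasDerivAt (fun σ : ℝ => B - σ) (-1) x := by
    simpa using (hasDerivAt_id x).const_sub B
  have h1 : HasDerivAt (fun σ : ℝ => (1 / 2) * (B - σ) ^ 2) (x - B) x := by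
    have := (hb.pow 2).const_mul (1 / 2 : ℝ)
    refine this.congr_deriv ?_
    push_cast
    ring
  have h2 : HasDerivAt (fun σ : ℝ => (ω ^ (2 - p) / p) * σ ^ p)
      (ω ^ (2 - p) * x ^ (p - 1)) x := by
    have := (Real.hasDerivAt_rpow_const (x := x) (p := p) (Or.inl hx)).const_mul
      (ω ^ (2 - p) / p)
    refine this.congr_deriv ?_
    field_simp
  exact h1.add h2

lemma Gf_foc {ω p B x : ℝ} (hp : 0 < p) (hx : 0 < x)
    (hmin : ∀ σ : ℝ, 0 ≤ σ → Gf ω p B x ≤ Gf ω p B σ) :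
    B - x = ω ^ (2 - p) * x ^ (p - 1) := by
  have hloc : IsLocalMin (fun σ => Gf ω p B σ) x := by
    filter_upwards [eventually_gt_nhds hx] with σ hσ using hmin σ hσ.le
  have hz := hloc.deriv_eq_zero
  rw [(hasDerivAt_Gf hp.ne' hx.ne').deriv] at hz
  linarith

lemma Gf_min_le {ω p B x : ℝ} (hω : 0 < ω) (hp : 0 < p) (hB : 0 < B) (hx : 0 ≤ x)
    (hmin : ∀ σ : ℝ, 0 ≤ σ → Gf ω p B x ≤ Gf ω p B σ) : x ≤ B := by
  by_contra hc
  push_neg at hc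
  have h := hmin B hB.le
  have h1 : B ^ p < x ^ p := Real.rpow_lt_rpow hB.le hc hp
  have h2 : 0 < ω ^ (2 - p) / p := div_pos (Real.rpow_pos_of_pos hω _) hp
  simp only [Gf] at h
  nlinarith [sq_nonneg (B - x), mul_lt_mul_of_pos_left h1 h2]

lemma Gf_min_ge_omega {ω p B x : ℝ} (hω : 0 < ω) (hp : 0 < p) (hp2 : p ≤ 2)
    (hB : 2 * ω < B) (hx : 0 < x)
    (hmin : ∀ σ : ℝ, 0 ≤ σ → Gf ω p B x ≤ Gf ω p B σ) : ω ≤ x := by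
  by_contra hc
  push_neg at hc
  have hfoc : B - x = ω ^ (2 - p) * x ^ (p - 1) := Gf_foc hp hx hmin
  have hω2p : 0 < ω ^ (2 - p) := Real.rpow_pos_of_pos hω _
  rcases le_or_gt 1 p with hp1 | hp1
  · have h1 : x ^ (p - 1) ≤ ω ^ (p - 1) :=
      Real.rpow_le_rpow hx.le hc.le (by linarith)
    have h2 : ω ^ (2 - p) * ω ^ (p - 1) = ω := by
      rw [← Real.rpow_add hω]
      norm_num
    nlinarith [mul_le_mul_of_nonneg_left h1 hω2p.le]
  · -- case p < 1
    have h1p : 0 < 1 - p := by linarith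
    have h2p : 0 < 2 - p := by linarith
    set rs : ℝ := (1 - p) ^ ((1 : ℝ) / (2 - p)) with hrs
    have hrs0 : 0 < rs := Real.rpow_pos_of_pos h1p _
    have hrs1 : rs ≤ 1 := Real.rpow_le_one h1p.le (by linarith) (by positivity)
    set x₀ : ℝ := ω * rs with hx₀def
    have hx₀0 : 0 < x₀ := mul_pos hω hrs0
    have hx₀ω : x₀ ≤ ω := by nlinarith
    have hkey : rs ^ (p - 2) = (1 - p)⁻¹ := by
      rw [hrs, ← Real.rpow_mul h1p.le,
        show (1 : ℝ) / (2 - p) * (p - 2) = -1 by field_simp; ring,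
        Real.rpow_neg_one]
    have hx₀key : (1 - p) * (ω ^ (2 - p) * x₀ ^ (p - 2)) = 1 := by
      have h1 : ω ^ (2 - p) * ω ^ (p - 2) = 1 := by
        rw [← Real.rpow_add hω]; norm_num
      rw [hx₀def, Real.mul_rpow hω.le hrs0.le, hkey,
        show (1 - p) * (ω ^ (2 - p) * (ω ^ (p - 2) * (1 - p)⁻¹)) =
          ω ^ (2 - p) * ω ^ (p - 2) * ((1 - p) * (1 - p)⁻¹) from by ring,
        h1, mul_inv_cancel₀ h1p.ne', mul_one]
    set g : ℝ → ℝ := fun σ => σ + ω ^ (2 - p) * σ ^ (p - 1) with hg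
    have hgd : ∀ σ : ℝ, 0 < σ →
        HasDerivAt g (1 + ω ^ (2 - p) * ((p - 1) * σ ^ (p - 2))) σ := by
      intro σ hσ
      have h2' : HasDerivAt (fun τ : ℝ => τ ^ (p - 1)) ((p - 1) * σ ^ (p - 2)) σ := by
        have := Real.hasDerivAt_rpow_const (x := σ) (p := p - 1) (Or.inl hσ.ne')
        rwa [show p - 1 - 1 = p - 2 by ring] at this
      exact (hasDerivAt_id σ).add (h2'.const_mul (ω ^ (2 - p)))
    -- g is monotone on [x₀, ω]
    have hmono : MonotoneOn g (Icc x₀ ω) := by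
      apply monotoneOn_of_deriv_nonneg (convex_Icc _ _)
      · intro σ hσ
        exact (hgd σ (lt_of_lt_of_le hx₀0 hσ.1)).continuousAt.continuousWithinAt
      · intro σ hσ
        rw [interior_Icc] at hσ
        exact (hgd σ (lt_trans hx₀0 hσ.1)).differentiableAt.differentiableWithinAt
      · intro σ hσ
        rw [interior_Icc] at hσ
        have hσ0 : 0 < σ := lt_trans hx₀0 hσ.1
        rw [(hgd σ hσ0).deriv]
        have hle : σ ^ (p - 2) ≤ x₀ ^ (p - 2) :=
          Real.rpow_le_rpow_of_nonpos hx₀0 hσ.1.le (by linarith)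
        nlinarith [mul_le_mul_of_nonneg_left hle (mul_pos h1p hω2p).le]
    have hgω : g ω = 2 * ω := by
      have : ω ^ (2 - p) * ω ^ (p - 1) = ω := by
        rw [← Real.rpow_add hω]; norm_num
      simp only [hg]
      rw [this]; ring
    have hgx : g x = B := by
      simp only [hg]; linarith
    -- hence x < x₀
    have hxx₀ : x < x₀ := by
      by_contra hcc
      push_neg at hcc
      have h2 := hmono ⟨hcc, hc.le⟩ (right_mem_Icc.2 hx₀ω) hc.le
      rw [hgx, hgω] at h2
      linarith
    -- g is strictly antitone on (0, x₀]
    have hganti : StrictAntiOn g (Ioc 0 x₀) := by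
      apply strictAntiOn_of_deriv_neg (convex_Ioc _ _)
      · intro σ hσ
        exact (hgd σ hσ.1).continuousAt.continuousWithinAt
      · intro σ hσ
        rw [interior_Ioc] at hσ
        rw [(hgd σ hσ.1).deriv]
        have hlt : x₀ ^ (p - 2) < σ ^ (p - 2) :=
          Real.rpow_lt_rpow_of_neg hσ.1 hσ.2 (by linarith)
        nlinarith [mul_lt_mul_of_pos_left hlt (mul_pos h1p hω2p)]
    -- Gf is strictly antitone on [x, x₀]
    have hGanti : StrictAntiOn (fun σ => Gf ω p B σ) (Icc x x₀) := by
      apply strictAntiOn_of_deriv_neg (convex_Icc _ _)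
      · intro σ hσ
        exact (hasDerivAt_Gf hp.ne' (lt_of_lt_of_le hx hσ.1).ne').continuousAt.continuousWithinAt
      · intro σ hσ
        rw [interior_Icc] at hσ
        have hσ0 : 0 < σ := lt_trans hx hσ.1
        rw [(hasDerivAt_Gf hp.ne' hσ0.ne').deriv]
        have h1 : g σ < g x := hganti ⟨hx, hxx₀.le⟩ ⟨hσ0, hσ.2.le⟩ hσ.1
        rw [hgx] at h1
        simp only [hg] at h1
        linarith
    have hfinal : Gf ω p B x₀ < Gf ω p B x :=
      hGanti ⟨le_refl x, hxx₀.le⟩ ⟨hxx₀.le, le_refl x₀⟩ hxx₀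
    linarith [hmin x₀ hx₀0.le]

set_option maxHeartbeats 1600000 in
/-- For `b ≠ 0` and `0 < ω < |b|/2`: if `0 < q < q' ≤ 2`, `q` satisfies the
non-thresholding condition, `h` is a global minimizer of `F ω q b`, and `h'`
is a global minimizer of `F ω q' b`, then `|h| ≥ |h'| > 0`. -/
theorem magnitude_nonincreasing_in_q (b ω q q' h h' : ℝ) (hb : b ≠ 0)
    (hω : 0 < ω) (hωb : ω < |b| / 2)
    (hq0 : 0 < q) (hqq' : q < q') (hq'2 : q' ≤ 2)
    (hcond : 1 ≤ q ∨ (q < 1 ∧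
      ω < (|b| / (2 - q)) * (2 * (1 - q)) ^ ((1 - q) / (2 - q)) * q ^ (1 / (2 - q))))
    (hmin : ∀ β : ℝ, F ω q b h ≤ F ω q b β)
    (hmin' : ∀ β : ℝ, F ω q' b h' ≤ F ω q' b β) :
    |h'| ≤ |h| ∧ 0 < |h'| := by
  have hq'0 : 0 < q' := lt_trans hq0 hqq'
  set B : ℝ := |b| with hBdef
  have hB : 0 < B := abs_pos.2 hb
  have hB2 : 2 * ω < B := by linarith
  set s : ℝ := |h| with hsdef
  set t : ℝ := |h'| with htdef
  have hs0 : 0 ≤ s := abs_nonneg _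
  have ht0 : 0 ≤ t := abs_nonneg _
  have hGs : ∀ σ : ℝ, 0 ≤ σ → Gf ω q B s ≤ Gf ω q B σ := Gf_of_F hmin
  have hGt : ∀ σ : ℝ, 0 ≤ σ → Gf ω q' B t ≤ Gf ω q' B σ := Gf_of_F hmin'
  have hGf0 : ∀ p : ℝ, 0 < p → Gf ω p B 0 = B ^ 2 / 2 := by
    intro p hp
    simp [Gf, Real.zero_rpow hp.ne']
    ring
  -- the minimum value for exponent q is strictly below B^2/2
  have hlt : Gf ω q B s < B ^ 2 / 2 := by
    rcases hcond with hq1 | ⟨hq1, hT⟩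
    · refine lt_of_le_of_lt (hGs ω hω.le) ?_
      have h2 : ω ^ (2 - q) * ω ^ q = ω * ω := by
        rw [← Real.rpow_add hω, show (2 : ℝ) - q + q = 1 + 1 by ring,
          Real.rpow_add hω, Real.rpow_one]
      have hq'' : ω ^ (2 - q) / q * ω ^ q ≤ ω * ω := by
        rw [div_mul_eq_mul_div, h2]
        exact div_le_self (mul_self_nonneg ω) hq1
      simp only [Gf]
      nlinarith
    · -- q < 1 : use the explicit test point σ₀
      have h2q : 0 < 2 - q := by linarith
      have h1q : 0 < 1 - q := by linarith
      set σ₀ : ℝ := 2 * (1 - q) * (B / (2 - q)) with hσ₀def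
      have hσ₀0 : 0 < σ₀ := mul_pos (by linarith) (div_pos hB h2q)
      refine lt_of_le_of_lt (hGs σ₀ hσ₀0.le) ?_
      set T : ℝ := B / (2 - q) * (2 * (1 - q)) ^ ((1 - q) / (2 - q)) * q ^ (1 / (2 - q))
        with hTdef
      have hbq0 : (0:ℝ) ≤ B / (2 - q) := (div_pos hB h2q).le
      have h2q1 : (0:ℝ) ≤ 2 * (1 - q) := by linarith
      have hTpow : T ^ (2 - q) = q * (B / (2 - q)) * σ₀ ^ (1 - q) := by
        have e1 : ((2 * (1 - q)) ^ ((1 - q) / (2 - q))) ^ (2 - q) =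
            (2 * (1 - q)) ^ (1 - q) := by
          rw [← Real.rpow_mul h2q1,
            show (1 - q) / (2 - q) * (2 - q) = 1 - q by field_simp]
        have e2 : (q ^ ((1:ℝ) / (2 - q))) ^ (2 - q) = q := by
          rw [← Real.rpow_mul hq0.le,
            show (1:ℝ) / (2 - q) * (2 - q) = 1 by field_simp, Real.rpow_one]
        have e3' : ∀ y : ℝ, 0 < y → y ^ (2 - q) = y * y ^ (1 - q) := by
          intro y hy
          rw [show (2:ℝ) - q = 1 + (1 - q) by ring, Real.rpow_add hy, Real.rpow_one]
        have e3 : (B / (2 - q)) ^ (2 - q) = (B / (2 - q)) * (B / (2 - q)) ^ (1 - q) :=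
          e3' _ (div_pos hB h2q)
        have e4 : σ₀ ^ (1 - q) = (2 * (1 - q)) ^ (1 - q) * (B / (2 - q)) ^ (1 - q) := by
          rw [hσ₀def, Real.mul_rpow h2q1 hbq0]
        rw [hTdef, Real.mul_rpow (mul_nonneg hbq0 (Real.rpow_nonneg h2q1 _))
            (Real.rpow_nonneg hq0.le _),
          Real.mul_rpow hbq0 (Real.rpow_nonneg h2q1 _), e1, e2, e3, e4]
        ring
      have hA : ω ^ (2 - q) < T ^ (2 - q) := Real.rpow_lt_rpow hω.le hT h2q
      have hσ₀q : σ₀ ^ (1 - q) * σ₀ ^ q = σ₀ := by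
        rw [← Real.rpow_add hσ₀0, show (1:ℝ) - q + q = 1 by ring, Real.rpow_one]
      have hσ₀qpos : 0 < σ₀ ^ q := Real.rpow_pos_of_pos hσ₀0 _
      -- Gf ω q B σ₀ < B^2/2
      simp only [Gf]
      have hterm : ω ^ (2 - q) / q * σ₀ ^ q < B / (2 - q) * σ₀ := by
        have h5 : ω ^ (2 - q) * σ₀ ^ q < T ^ (2 - q) * σ₀ ^ q :=
          mul_lt_mul_of_pos_right hA hσ₀qpos
        rw [hTpow] at h5
        have h6 : q * (B / (2 - q)) * σ₀ ^ (1 - q) * σ₀ ^ q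
            = q * (B / (2 - q) * σ₀) := by
          rw [mul_assoc, hσ₀q]; ring
        rw [h6] at h5
        rw [div_mul_eq_mul_div, div_lt_iff₀ hq0]
        linarith
      have heq : (1:ℝ) / 2 * (B - σ₀) ^ 2 + B / (2 - q) * σ₀ = B ^ 2 / 2 := by
        rw [hσ₀def]
        field_simp
        ring
      linarith
  -- s > 0
  have hspos : 0 < s := by
    rcases hs0.lt_or_eq with h | h
    · exact h
    · exfalso
      rw [← h, hGf0 q hq0] at hlt
      exact lt_irrefl _ hlt
  have hsB : s ≤ B := Gf_min_le hω hq0 hB hs0 hGs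
  -- t > 0
  have htpos : 0 < t := by
    rcases ht0.lt_or_eq with hlt' | heq0
    · exact hlt'
    · exfalso
      rw [← heq0] at hGt
      have hzero : ∀ σ : ℝ, 0 ≤ σ → B ^ 2 / 2 ≤ Gf ω q' B σ := by
        intro σ hσ
        rw [← hGf0 q' hq'0]
        exact hGt σ hσ
      -- comparison at σ = s gives (ω^{2-q}/q) s^q < (ω^{2-q'}/q') s^{q'}
      have hA : ω ^ (2 - q) / q * s ^ q < ω ^ (2 - q') / q' * s ^ q' := by
        have h1 := hzero s hs0
        simp only [Gf] at h1 hlt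
        linarith
      -- deduce s > c * ω with c = (q'/q)^(1/(q'-q))
      have hqq : 0 < q' - q := by linarith
      set c : ℝ := (q' / q) ^ ((1:ℝ) / (q' - q)) with hcdef
      have hc0 : 0 < c := Real.rpow_pos_of_pos (div_pos hq'0 hq0) _
      have hsc : c * ω < s := by
        have hsq : 0 < s ^ q := Real.rpow_pos_of_pos hspos _
        have hsplit : s ^ q' = s ^ q * s ^ (q' - q) := by
          rw [← Real.rpow_add hspos]; ring_nf
        have hwsplit : ω ^ (2 - q) = ω ^ (2 - q') * ω ^ (q' - q) := by
          rw [← Real.rpow_add hω]; ring_nf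
        have hw2q' : 0 < ω ^ (2 - q') := Real.rpow_pos_of_pos hω _
        -- from hA : (q'/q) * ω^{q'-q} < s^{q'-q}
        have hpos2 : 0 < ω ^ (2 - q') * s ^ q := mul_pos hw2q' hsq
        have hstep : q' / q * ω ^ (q' - q) < s ^ (q' - q) := by
          rw [hwsplit, hsplit] at hA
          rw [div_mul_eq_mul_div, div_lt_iff₀ hq0]
          have h1 : ω ^ (2 - q') * ω ^ (q' - q) / q * s ^ q * (q * q')
              = ω ^ (2 - q') * s ^ q * (q' * ω ^ (q' - q)) := by field_simp
          have h2 : ω ^ (2 - q') / q' * (s ^ q * s ^ (q' - q)) * (q * q')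
              = ω ^ (2 - q') * s ^ q * (s ^ (q' - q) * q) := by field_simp
          have h3 := mul_lt_mul_of_pos_right hA (mul_pos hq0 hq'0)
          rw [h1, h2] at h3
          exact lt_of_mul_lt_mul_left h3 hpos2.le
        have hmono := Real.rpow_lt_rpow
          (mul_nonneg (div_pos hq'0 hq0).le (Real.rpow_nonneg hω.le _)) hstep
          (one_div_pos.mpr hqq)
        rw [← Real.rpow_mul hs0, show (q' - q) * ((1:ℝ)/(q' - q)) = 1 by field_simp,
          Real.rpow_one, Real.mul_rpow (div_pos hq'0 hq0).le (Real.rpow_nonneg hω.le _),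
          ← Real.rpow_mul hω.le, show (q' - q) * ((1:ℝ)/(q' - q)) = 1 by field_simp,
          Real.rpow_one] at hmono
        exact hmono
      have hcB : c * ω < B := lt_of_lt_of_le hsc hsB
      -- key : 2/q' ≤ c^(2-q')
      have hkey : 2 / q' ≤ c ^ (2 - q') := by
        have hlog : (q' - q) / q' ≤ Real.log (q' / q) := by
          have h1 := Real.log_le_sub_one_of_pos (div_pos hq0 hq'0)
          rw [Real.log_div hq0.ne' hq'0.ne'] at h1
          have h2 : Real.log (q' / q) = Real.log q' - Real.log q :=
            Real.log_div hq'0.ne' hq0.ne'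
          rw [h2]
          have h3 : (q' - q) / q' = 1 - q / q' := by field_simp
          rw [h3]
          linarith
        have hcq : c ^ (2 - q') = (q' / q) ^ ((1:ℝ) / (q' - q) * (2 - q')) := by
          rw [hcdef, ← Real.rpow_mul (div_pos hq'0 hq0).le]
        rw [hcq, Real.rpow_def_of_pos (div_pos hq'0 hq0)]
        have h4 : (2 - q') / q' ≤ Real.log (q' / q) * ((1:ℝ) / (q' - q) * (2 - q')) := by
          have h5 : (0:ℝ) ≤ (1:ℝ) / (q' - q) * (2 - q') :=
            mul_nonneg (one_div_pos.mpr hqq).le (by linarith)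
          have h6 := mul_le_mul_of_nonneg_right hlog h5
          calc (2 - q') / q' = (q' - q) / q' * ((1:ℝ) / (q' - q) * (2 - q')) := by
                field_simp
            _ ≤ _ := h6
        calc 2 / q' = (2 - q') / q' + 1 := by field_simp; ring
          _ ≤ Real.exp ((2 - q') / q') := Real.add_one_le_exp _
          _ ≤ _ := Real.exp_le_exp.2 h4
      -- test point c * ω beats 0 for exponent q'
      have hfin : Gf ω q' B (c * ω) < B ^ 2 / 2 := by
        have hterm : ω ^ (2 - q') / q' * (c * ω) ^ q' ≤ c * c * (ω * ω) / 2 := by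
          have e1 : (c * ω) ^ q' = c ^ q' * ω ^ q' := Real.mul_rpow hc0.le hω.le
          have e2 : ω ^ (2 - q') * ω ^ q' = ω * ω := by
            rw [← Real.rpow_add hω, show (2:ℝ) - q' + q' = 1 + 1 by ring,
              Real.rpow_add hω, Real.rpow_one]
          have e3 : c ^ (2 - q') * c ^ q' = c * c := by
            rw [← Real.rpow_add hc0, show (2:ℝ) - q' + q' = 1 + 1 by ring,
              Real.rpow_add hc0, Real.rpow_one]
          have hcq'pos : 0 < c ^ q' := Real.rpow_pos_of_pos hc0 _
          have h7 : 2 / q' * c ^ q' ≤ c ^ (2 - q') * c ^ q' :=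
            mul_le_mul_of_nonneg_right hkey hcq'pos.le
          rw [e3] at h7
          -- h7 : 2/q' * c^q' ≤ c * c
          have h8 : 0 < ω * ω := by positivity
          rw [e1, div_mul_eq_mul_div, div_le_iff₀ hq'0]
          calc ω ^ (2 - q') * (c ^ q' * ω ^ q') = c ^ q' * (ω * ω) := by
                rw [show ω ^ (2 - q') * (c ^ q' * ω ^ q') =
                  c ^ q' * (ω ^ (2 - q') * ω ^ q') from by ring, e2]
            _ ≤ c * c * (ω * ω) / 2 * q' := by
                rw [div_mul_eq_mul_div, div_le_iff₀ hq'0] at h7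
                linarith [mul_le_mul_of_nonneg_right h7 (mul_nonneg hω.le hω.le)]
        have hc2 : 0 < c * ω := mul_pos hc0 hω
        simp only [Gf]
        nlinarith [hterm, mul_pos hc2 (sub_pos.2 hcB)]
      have := hzero (c * ω) (mul_pos hc0 hω).le
      linarith
  refine ⟨?_, htpos⟩
  -- main monotonicity argument
  by_contra hcon
  push_neg at hcon
  -- hcon : s < t
  have hsω : ω ≤ s := Gf_min_ge_omega hω hq0 (by linarith) hB2 hspos hGs
  have e1 := hGs t ht0
  have e2 := hGt s hs0
  simp only [Gf] at e1 e2
  set K : ℝ := q' / q * ω ^ (q' - q) with hKdef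
  have hK0 : 0 < K :=
    mul_pos (div_pos (lt_trans hq0 hqq') hq0) (Real.rpow_pos_of_pos hω _)
  have hw2q' : 0 < ω ^ (2 - q') := Real.rpow_pos_of_pos hω _
  have hlamK : ω ^ (2 - q) / q = K * (ω ^ (2 - q') / q') := by
    rw [hKdef, show q' / q * ω ^ (q' - q) * (ω ^ (2 - q') / q')
      = ω ^ (q' - q) * ω ^ (2 - q') / q from by field_simp,
      ← Real.rpow_add hω]
    ring_nf
  -- exchange inequality : ψ t ≤ ψ s for ψ x = x^q' - K x^q
  have hψ : t ^ q' - K * t ^ q ≤ s ^ q' - K * s ^ q := by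
    rw [hlamK] at e1
    have h9 : ω ^ (2 - q') / q' * (t ^ q' - s ^ q')
        ≤ ω ^ (2 - q') / q' * (K * (t ^ q - s ^ q)) := by
      linarith
    have h10 := (mul_le_mul_iff_right₀ (div_pos hw2q' (lt_trans hq0 hqq'))).mp h9
    linarith
  -- ψ is strictly monotone on [ω, ∞)
  have hψmono : StrictMonoOn (fun x : ℝ => x ^ q' - K * x ^ q) (Ici ω) := by
    apply strictMonoOn_of_deriv_pos (convex_Ici _)
    · intro x hx
      have hx0 : (0:ℝ) < x := lt_of_lt_of_le hω hx
      have c1 : ContinuousAt (fun x : ℝ => x ^ q') x :=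
        Real.continuousAt_rpow_const x q' (Or.inl hx0.ne')
      have c2 : ContinuousAt (fun x : ℝ => x ^ q) x :=
        Real.continuousAt_rpow_const x q (Or.inl hx0.ne')
      exact (c1.sub (c2.const_mul K)).continuousWithinAt
    · intro x hx
      rw [interior_Ici] at hx
      have hx0 : (0:ℝ) < x := lt_trans hω hx
      have d1 : HasDerivAt (fun x : ℝ => x ^ q' - K * x ^ q)
          (q' * x ^ (q' - 1) - K * (q * x ^ (q - 1))) x :=
        (Real.hasDerivAt_rpow_const (Or.inl hx0.ne')).sub
          ((Real.hasDerivAt_rpow_const (Or.inl hx0.ne')).const_mul K)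
      rw [d1.deriv]
      have hsplit : x ^ (q' - 1) = x ^ (q - 1) * x ^ (q' - q) := by
        rw [← Real.rpow_add hx0]; ring_nf
      have hwx : ω ^ (q' - q) < x ^ (q' - q) :=
        Real.rpow_lt_rpow hω.le hx (by linarith)
      have hxq1 : 0 < x ^ (q - 1) := Real.rpow_pos_of_pos hx0 _
      rw [hKdef, hsplit]
      have : q' / q * ω ^ (q' - q) * (q * x ^ (q - 1)) = q' * (x ^ (q - 1) * ω ^ (q' - q)) := by
        field_simp
      rw [this]
      have := mul_lt_mul_of_pos_left hwx hxq1
      nlinarith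
  have hfinal := hψmono (mem_Ici.2 hsω) (mem_Ici.2 (by linarith : ω ≤ t)) hcon
  simp only at hfinal
  linarith
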